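/- Let 0<a and 0<b<1 with 4a(1-a)<b^2, and set R=\sqrt{b^2-4a+4a^2}, w_+=(b+R)/(2b), w_-=(b-R)/(2b), t_+=(2-2a-b^2+bR)/(2(1-a)(1+b)), t_-=(2-2a-b^2-bR)/(2(1-a)(1+b)), and define F(a,b)= b[\ln(1-t_+)-\ln(1-t_-)] + (1-b)[\ln t_+ - \ln t_-] + a[\ln w_+ - \ln(1-w_+) - \ln w_- + \ln(1-w_-)] + b[\ln(1-(1-t_+)w_+) - \ln(1-(1-t_-)w_-)]. Suppose (a_j), (b_j), (\eta_j) are real sequences with a_j>0, b_j\in(0,1), b_j\to 0, a_j/b_j^2 \to 0, with 4a_j(1-a_j)<b_j^2 and all the quantities t_\pm, 1-t_\pm, w_\pm, 1-w_\pm, 1-(1-t_\pm)w_\pm formed from (a_j,b_j) positive, and suppose \eta_j < -4a_j satisfies 2a_j\ln((1-u_+)/u_+) - \sqrt{\eta_j^2+4a_j\eta_j} = F(a_j,b_j), where u_+ = (\eta_j+\sqrt{\eta_j^2+4a_j\eta_j})/(2\eta_j) \in (0,1/2). Then \eta_j/b_j^2 \to -1 as j\to\infty; that is, \eta = -b^2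 + o(b^2). -/

import Mathlib

open Real Filter

/-- `R = √(b² - 4a + 4a²)`. -/
noncomputable def Rq (a b : ℝ) : ℝ := Real.sqrt (b ^ 2 - 4 * a + 4 * a ^ 2)

/-- `w₊ = (b + R)/(2b)`. -/
noncomputable def wPlus (a b : ℝ) : ℝ := (b + Rq a b) / (2 * b)

/-- `w₋ = (b - R)/(2b)`. -/
noncomputable def wMinus (a b : ℝ) : ℝ := (b - Rq a b) / (2 * b)

/-- `t₊ = (2 - 2a - b² + bR)/(2(1-a)(1+b))`. -/
noncomputable def tPlus (a b : ℝ) : ℝ :=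
  (2 - 2 * a - b ^ 2 + b * Rq a b) / (2 * (1 - a) * (1 + b))

/-- `t₋ = (2 - 2a - b² - bR)/(2(1-a)(1+b))`. -/
noncomputable def tMinus (a b : ℝ) : ℝ :=
  (2 - 2 * a - b ^ 2 - b * Rq a b) / (2 * (1 - a) * (1 + b))

/-- The real value of `f(t₀(w₊), w₊) - f(t₀(w₋), w₋)`. -/
noncomputable def Fdiff (a b : ℝ) : ℝ :=
  b * (Real.log (1 - tPlus a b) - Real.log (1 - tMinus a b))
    + (1 - b) * (Real.log (tPlus a b) - Real.log (tMinus a b))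
    + a * (Real.log (wPlus a b) - Real.log (1 - wPlus a b)
        - Real.log (wMinus a b) + Real.log (1 - wMinus a b))
    + b * (Real.log (1 - (1 - tPlus a b) * wPlus a b)
        - Real.log (1 - (1 - tMinus a b) * wMinus a b))


lemma sqrt_add_le (u v : ℝ) (hu : 0 ≤ u) (hv : 0 ≤ v) :
    Real.sqrt (u + v) ≤ Real.sqrt u + Real.sqrt v := by
  have h : u + v ≤ (Real.sqrt u + Real.sqrt v) ^ 2 := by
    have := Real.sq_sqrt hu; have := Real.sq_sqrt hv
    nlinarith [Real.sqrt_nonneg u, Real.sqrt_nonneg v]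
  calc Real.sqrt (u + v) ≤ Real.sqrt ((Real.sqrt u + Real.sqrt v) ^ 2) := Real.sqrt_le_sqrt h
    _ = _ := Real.sqrt_sq (by positivity)

lemma log_le_two_sqrt {y : ℝ} (hy : 0 < y) : Real.log y ≤ 2 * Real.sqrt y := by
  have h1 : Real.log (Real.sqrt y) ≤ Real.sqrt y - 1 :=
    Real.log_le_sub_one_of_pos (Real.sqrt_pos.2 hy)
  have h2 : Real.log (Real.sqrt y) = Real.log y / 2 := Real.log_sqrt hy.le
  nlinarith [Real.sqrt_nonneg y]

lemma mul_log_div_le {e C : ℝ} (he : 0 < e) (hC : 0 < C) :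
    e * Real.log (C / e) ≤ 2 * Real.sqrt C * Real.sqrt e := by
  have h := log_le_two_sqrt (y := C / e) (by positivity)
  have hsd : Real.sqrt (C / e) = Real.sqrt C / Real.sqrt e := Real.sqrt_div hC.le e
  have hse : 0 < Real.sqrt e := Real.sqrt_pos.2 he
  have : e * Real.log (C / e) ≤ e * (2 * (Real.sqrt C / Real.sqrt e)) := by
    rw [hsd] at h; exact mul_le_mul_of_nonneg_left h he.le
  calc e * Real.log (C / e) ≤ e * (2 * (Real.sqrt C / Real.sqrt e)) := this
    _ = 2 * Real.sqrt C * (e / Real.sqrt e) := by ring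
    _ = 2 * Real.sqrt C * Real.sqrt e := by rw [Real.div_sqrt]

lemma pos_of_div_pos {X D : ℝ} (hD : 0 < D) (h : 0 < X / D) : 0 < X := by
  rcases div_pos_iff.1 h with ⟨h1, _⟩ | ⟨_, h2⟩
  · exact h1
  · linarith

lemma Fdiff_eq (a b : ℝ) (ha : 0 < a) (ha1 : a < 1) (hb : 0 < b) (hb1 : b < 1)
    (hdisc : 4 * a * (1 - a) < b ^ 2)
    (htp : 0 < tPlus a b) (htm : 0 < tMinus a b)
    (h1tp : 0 < 1 - tPlus a b) (h1tm : 0 < 1 - tMinus a b)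
    (hwm : 0 < wMinus a b) :
    Fdiff a b = 2 * b * Real.log ((2 - 2*a + b - Rq a b) / (2 - 2*a + b + Rq a b))
      + (1 - b) * Real.log ((2 - 2*a - b^2 + b * Rq a b) / (2 - 2*a - b^2 - b * Rq a b))
      + 2 * a * Real.log ((b + Rq a b) / (b - Rq a b)) := by
  set R := Rq a b with hR
  have hRpos : 0 < R := Real.sqrt_pos.2 (by nlinarith)
  have hRsq : R ^ 2 = b ^ 2 - 4 * a + 4 * a ^ 2 := Real.sq_sqrt (by nlinarith)
  have hbR : 0 < b - R := by
    have h := hwm; rw [wMinus, ← hR] at h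
    exact pos_of_div_pos (by linarith) h
  have hD : (0:ℝ) < 2 * (1 - a) * (1 + b) := by nlinarith
  have hD' : (2 * (1 - a) * (1 + b)) ≠ 0 := ne_of_gt hD
  have hb' : b ≠ 0 := ne_of_gt hb
  have hb2 : (2:ℝ) * b ≠ 0 := by positivity
  have hbR' : b - R ≠ 0 := ne_of_gt hbR
  have h1b : (1:ℝ) + b ≠ 0 := by positivity
  have h1a : (1:ℝ) - a ≠ 0 := by linarith
  have e1p : 1 - tPlus a b = b * (2 - 2*a + b - R) / (2 * (1 - a) * (1 + b)) := by
    rw [tPlus, ← hR]; field_simp; try ring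
  have e1m : 1 - tMinus a b = b * (2 - 2*a + b + R) / (2 * (1 - a) * (1 + b)) := by
    rw [tMinus, ← hR]; field_simp; try ring
  have hA : 0 < 2 - 2*a + b - R := by
    have h := h1tp; rw [e1p] at h
    have := pos_of_div_pos hD h
    nlinarith
  have hB : 0 < 2 - 2*a + b + R := by linarith
  have hA' := ne_of_gt hA
  have hB' := ne_of_gt hB
  have hP : 0 < 2 - 2*a - b^2 + b * R := by
    have h := htp; rw [tPlus, ← hR] at h
    exact pos_of_div_pos hD h
  have hQ : 0 < 2 - 2*a - b^2 - b * R := by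
    have h := htm; rw [tMinus, ← hR] at h
    exact pos_of_div_pos hD h
  have hP' := ne_of_gt hP
  have hQ' := ne_of_gt hQ
  have hwsum : 1 - wPlus a b = wMinus a b := by
    rw [wPlus, wMinus, ← hR]; field_simp; try ring
  have hwsum' : 1 - wMinus a b = wPlus a b := by
    rw [wPlus, wMinus, ← hR]; field_simp; try ring
  have hwp : 0 < wPlus a b := by rw [wPlus, ← hR]; positivity
  have e2p : 1 - (1 - tPlus a b) * wPlus a b = (2 - 2*a + b - R) / (2 * (1 + b)) := by
    rw [e1p, wPlus, ← hR]; field_simp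
    linear_combination hRsq
  have e2m : 1 - (1 - tMinus a b) * wMinus a b = (2 - 2*a + b + R) / (2 * (1 + b)) := by
    rw [e1m, wMinus, ← hR]; field_simp
    linear_combination hRsq
  have d1 : Real.log (1 - tPlus a b) - Real.log (1 - tMinus a b)
      = Real.log ((2 - 2*a + b - R) / (2 - 2*a + b + R)) := by
    rw [e1p, e1m, ← Real.log_div (by positivity) (by positivity)]
    congr 1
    field_simp; try ring
  have d2 : Real.log (tPlus a b) - Real.log (tMinus a b)
      = Real.log ((2 - 2*a - b^2 + b*R) / (2 - 2*a - b^2 - b*R)) := by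
    rw [tPlus, tMinus, ← hR, ← Real.log_div (by positivity) (by positivity)]
    congr 1
    field_simp; try ring
  have l1 : Real.log (wPlus a b) - Real.log (wMinus a b)
      = Real.log ((b + R) / (b - R)) := by
    rw [← Real.log_div (ne_of_gt hwp) (ne_of_gt hwm)]
    congr 1
    rw [wPlus, wMinus, ← hR]; field_simp; try ring
  have d4 : Real.log (1 - (1 - tPlus a b) * wPlus a b)
      - Real.log (1 - (1 - tMinus a b) * wMinus a b)
      = Real.log ((2 - 2*a + b - R) / (2 - 2*a + b + R)) := by
    rw [e2p, e2m, ← Real.log_div (by positivity) (by positivity)]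
    congr 1
    field_simp; try ring
  rw [Fdiff, d2, d4, hwsum, hwsum']
  have : b * (Real.log (1 - tPlus a b) - Real.log (1 - tMinus a b))
      = b * Real.log ((2 - 2*a + b - R) / (2 - 2*a + b + R)) := by rw [d1]
  rw [this]
  linear_combination (a : ℝ) * l1 + a * l1

lemma log_ratio_tendsto (ρ : ℕ → ℝ) (hρ : Tendsto ρ atTop (nhds 1))
    (hne : ∀ᶠ j in atTop, ρ j ≠ 1) :
    Tendsto (fun j => Real.log (ρ j) / (ρ j - 1)) atTop (nhds 1) := by
  have h0 : Tendsto ρ atTop (nhdsWithin 1 {(1:ℝ)}ᶜ) :=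
    tendsto_nhdsWithin_of_tendsto_nhds_of_eventually_within ρ hρ (by
      filter_upwards [hne] with j h using h)
  have hs : Tendsto (slope Real.log 1) (nhdsWithin 1 {(1:ℝ)}ᶜ) (nhds 1) := by
    have := hasDerivAt_iff_tendsto_slope.mp (Real.hasDerivAt_log one_ne_zero)
    simpa using this
  exact (hs.comp h0).congr fun j => by simp [slope_def_field, Real.log_one]


set_option maxHeartbeats 2000000 in
lemma stepA (a b : ℕ → ℝ)
    (ha : ∀ j, 0 < a j)
    (hb : ∀ j, 0 < b j ∧ b j < 1)
    (hb0 : Tendsto b atTop (nhds 0))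
    (hab : Tendsto (fun j => a j / (b j) ^ 2) atTop (nhds 0))
    (hdisc : ∀ j, 4 * a j * (1 - a j) < (b j) ^ 2)
    (hpos : ∀ j,
      0 < tPlus (a j) (b j) ∧ 0 < 1 - tPlus (a j) (b j) ∧
      0 < tMinus (a j) (b j) ∧ 0 < 1 - tMinus (a j) (b j) ∧
      0 < wPlus (a j) (b j) ∧ 0 < 1 - wPlus (a j) (b j) ∧
      0 < wMinus (a j) (b j) ∧ 0 < 1 - wMinus (a j) (b j) ∧
      0 < 1 - (1 - tPlus (a j) (b j)) * wPlus (a j) (b j) ∧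
      0 < 1 - (1 - tMinus (a j) (b j)) * wMinus (a j) (b j)) :
    Tendsto (fun j => Fdiff (a j) (b j) / (b j) ^ 2) atTop (nhds (-1)) := by
  set ε : ℕ → ℝ := fun j => a j / (b j) ^ 2 with hε
  set R : ℕ → ℝ := fun j => Rq (a j) (b j) with hRdef
  have hbpos : ∀ j, 0 < b j := fun j => (hb j).1
  have hb2pos : ∀ j, 0 < (b j)^2 := fun j => pow_pos (hbpos j) 2
  have hεpos : ∀ j, 0 < ε j := fun j => div_pos (ha j) (hb2pos j)
  have haε : ∀ j, a j = ε j * (b j)^2 := fun j =>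
    (div_mul_cancel₀ _ (ne_of_gt (hb2pos j))).symm
  have hεsmall : ∀ᶠ j in atTop, ε j < 1/100 :=
    hab.eventually (eventually_lt_nhds (show (0:ℝ) < 1/100 by norm_num))
  have hasmall : ∀ᶠ j in atTop, a j < 1/100 := by
    filter_upwards [hεsmall] with j h
    have hb1 := (hb j).2
    rw [haε j]
    nlinarith [hεpos j, hb2pos j, hbpos j]
  have hbsq0 : Tendsto (fun j => (b j)^2) atTop (nhds 0) := by
    have := hb0.pow 2; simpa using this
  have ha0 : Tendsto a atTop (nhds 0) := by
    have := hab.mul hbsq0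
    rw [show (0:ℝ) * 0 = 0 by norm_num] at this
    exact this.congr fun j => (haε j).symm
  have hRnonneg : ∀ j, 0 ≤ (b j)^2 - 4 * a j + 4 * (a j)^2 := fun j => by
    nlinarith [hdisc j]
  have hRpos : ∀ j, 0 < R j := fun j => Real.sqrt_pos.2 (by nlinarith [hdisc j])
  have hRsq : ∀ j, (R j)^2 = (b j)^2 - 4 * a j + 4 * (a j)^2 := fun j =>
    Real.sq_sqrt (hRnonneg j)
  have hR0 : Tendsto R atTop (nhds 0) := by
    have hin : Tendsto (fun j => (b j)^2 - 4 * a j + 4 * (a j)^2) atTop (nhds 0) := by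
      have h2 : Tendsto (fun j => (a j)^2) atTop (nhds 0) := by
        have := ha0.pow 2; simpa using this
      have := (hbsq0.sub (ha0.const_mul 4)).add (h2.const_mul 4)
      simpa [mul_comm] using this
    have := hin.sqrt
    simpa [hRdef, Rq] using this
  have hbR : ∀ j, 0 < b j - R j := by
    intro j
    have h := (hpos j).2.2.2.2.2.2.1
    rw [wMinus] at h
    exact pos_of_div_pos (by linarith [hbpos j]) h
  have hr1 : Tendsto (fun j => R j / b j) atTop (nhds 1) := by
    have hin : Tendsto (fun j => 1 - 4 * ε j + 4 * (a j * ε j)) atTop (nhds 1) := by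
      have := ((tendsto_const_nhds (x := (1:ℝ)) (f := atTop)).sub
        (hab.const_mul 4)).add ((ha0.mul hab).const_mul 4)
      simpa using this
    have h1 := hin.sqrt
    rw [show Real.sqrt 1 = 1 by simp] at h1
    refine h1.congr fun j => ?_
    have hbj := hbpos j
    rw [show (1 : ℝ) - 4 * ε j + 4 * (a j * ε j)
        = ((b j)^2 - 4 * a j + 4 * (a j)^2) / (b j)^2 by rw [hε]; field_simp]
    rw [Real.sqrt_div (hRnonneg j), Real.sqrt_sq hbj.le]
    simp [hRdef, Rq]
  have hden1 : Tendsto (fun j => 2 - 2 * a j + b j + R j) atTop (nhds 2) := by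
    have := (((tendsto_const_nhds (x := (2:ℝ)) (f := atTop)).sub
      (ha0.const_mul 2)).add hb0).add hR0
    simpa using this
  have hden2 : Tendsto (fun j => 2 - 2 * a j - (b j)^2 - b j * R j) atTop (nhds 2) := by
    have := ((((tendsto_const_nhds (x := (2:ℝ)) (f := atTop)).sub
      (ha0.const_mul 2)).sub hbsq0).sub (hb0.mul hR0))
    simpa using this
  have hnum1 : Tendsto (fun j => 2 - 2 * a j + b j - R j) atTop (nhds 2) := by
    have := (((tendsto_const_nhds (x := (2:ℝ)) (f := atTop)).sub
      (ha0.const_mul 2)).add hb0).sub hR0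
    simpa using this
  have hnum2 : Tendsto (fun j => 2 - 2 * a j - (b j)^2 + b j * R j) atTop (nhds 2) := by
    have := ((((tendsto_const_nhds (x := (2:ℝ)) (f := atTop)).sub
      (ha0.const_mul 2)).sub hbsq0).add (hb0.mul hR0))
    simpa using this
  have hden1pos : ∀ᶠ j in atTop, 0 < 2 - 2 * a j + b j + R j := by
    filter_upwards [hasmall] with j hja
    have := hRpos j; have := hbpos j; linarith
  have hden2pos : ∀ᶠ j in atTop, 0 < 2 - 2 * a j - (b j)^2 - b j * R j := by
    filter_upwards [hasmall] with j hja
    have h := (hpos j).2.2.1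
    rw [tMinus] at h
    have hD : (0:ℝ) < 2 * (1 - a j) * (1 + b j) := by nlinarith [hbpos j]
    exact pos_of_div_pos hD h
  have hnum2pos : ∀ᶠ j in atTop, 0 < 2 - 2 * a j - (b j)^2 + b j * R j := by
    filter_upwards [hden2pos] with j h
    nlinarith [hRpos j, hbpos j]
  -- piece 1 : ρ
  set ρ : ℕ → ℝ := fun j => (2 - 2*a j + b j - R j) / (2 - 2*a j + b j + R j) with hρdef
  have hρ : Tendsto ρ atTop (nhds 1) := by
    have := hnum1.div hden1 (by norm_num)
    rw [show (2:ℝ)/2 = 1 by norm_num] at this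
    exact this
  have hρne : ∀ᶠ j in atTop, ρ j ≠ 1 := by
    filter_upwards [hden1pos] with j hB
    have : ρ j < 1 := (div_lt_one hB).2 (by linarith [hRpos j])
    exact ne_of_lt this
  have hL1 := log_ratio_tendsto ρ hρ hρne
  have hfrac1 : Tendsto (fun j => (ρ j - 1) / b j) atTop (nhds (-1)) := by
    have h0 : Tendsto (fun j => (-2) * (R j / b j) / (2 - 2*a j + b j + R j))
        atTop (nhds (-1)) := by
      have := ((hr1.const_mul (-2)).div hden1 (by norm_num))
      rw [show (-2:ℝ) * 1 / 2 = -1 by norm_num] at this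
      exact this
    refine Tendsto.congr' ?_ h0
    filter_upwards [hden1pos] with j hB
    have hbj := (hbpos j).ne'
    have hBne := hB.ne'
    rw [hρdef]
    beta_reduce
    rw [div_sub_one hBne]
    field_simp
    ring
  have hlog1 : Tendsto (fun j => Real.log (ρ j) / b j) atTop (nhds (-1)) := by
    have := hL1.mul hfrac1
    rw [show (1:ℝ) * (-1) = -1 by norm_num] at this
    refine Tendsto.congr' ?_ this
    filter_upwards [hρne] with j hne
    have : ρ j - 1 ≠ 0 := sub_ne_zero.2 hne
    field_simp
  -- piece 2 : τ
  set τ : ℕ → ℝ := fun j => (2 - 2*a j - (b j)^2 + b j * R j)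
      / (2 - 2*a j - (b j)^2 - b j * R j) with hτdef
  have hτ : Tendsto τ atTop (nhds 1) := by
    have := hnum2.div hden2 (by norm_num)
    rw [show (2:ℝ)/2 = 1 by norm_num] at this
    exact this
  have hτne : ∀ᶠ j in atTop, τ j ≠ 1 := by
    filter_upwards [hden2pos] with j hQ
    have : 1 < τ j := (one_lt_div hQ).2 (by nlinarith [hRpos j, hbpos j])
    exact ne_of_gt this
  have hL2 := log_ratio_tendsto τ hτ hτne
  have hfrac2 : Tendsto (fun j => (τ j - 1) / (b j)^2) atTop (nhds 1) := by
    have h0 : Tendsto (fun j => 2 * (R j / b j) / (2 - 2*a j - (b j)^2 - b j * R j))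
        atTop (nhds 1) := by
      have := ((hr1.const_mul 2).div hden2 (by norm_num))
      rw [show (2:ℝ) * 1 / 2 = 1 by norm_num] at this
      exact this
    refine Tendsto.congr' ?_ h0
    filter_upwards [hden2pos] with j hQ
    have hbj := (hbpos j).ne'
    have hQne := hQ.ne'
    rw [hτdef]
    beta_reduce
    rw [div_sub_one hQne]
    field_simp
    ring
  have hlog2 : Tendsto (fun j => Real.log (τ j) / (b j)^2) atTop (nhds 1) := by
    have := hL2.mul hfrac2
    rw [show (1:ℝ) * 1 = 1 by norm_num] at this
    refine Tendsto.congr' ?_ this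
    filter_upwards [hτne] with j hne
    have : τ j - 1 ≠ 0 := sub_ne_zero.2 hne
    field_simp
  -- piece 3
  have hthird : Tendsto (fun j => 2 * ε j * Real.log ((b j + R j) / (b j - R j)))
      atTop (nhds 0) := by
    have hub : Tendsto (fun j => 6 * Real.sqrt (ε j)) atTop (nhds 0) := by
      have := hab.sqrt.const_mul 6
      simpa using this
    refine tendsto_of_tendsto_of_tendsto_of_le_of_le' tendsto_const_nhds hub ?_ ?_
    · filter_upwards with j
      have h1 : (1:ℝ) ≤ (b j + R j) / (b j - R j) :=
        (one_le_div (hbR j)).2 (by linarith [hRpos j])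
      have h2 := Real.log_nonneg h1
      have h3 := (hεpos j).le
      nlinarith
    · filter_upwards [hεsmall] with j hjε
      have hbj := hbpos j
      have haj := ha j
      have hb1j := (hb j).2
      have hval : (b j - R j) * (b j + R j) = 4 * a j - 4 * (a j)^2 := by
        linear_combination (-1 : ℝ) * hRsq j
      have hmul : (b j - R j) * (b j + R j) ≤ (b j - R j) * (2 * b j) :=
        mul_le_mul_of_nonneg_left (by linarith [hRpos j, hbR j]) (hbR j).le
      have ha12 : a j < 1/2 := by nlinarith [haε j, hεpos j, hb2pos j]
      have key : a j ≤ b j * (b j - R j) := by nlinarith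
      have h1 : a j / b j ≤ b j - R j := (div_le_iff₀ hbj).2 (by nlinarith)
      have h2 : b j + R j ≤ 2 * b j := by linarith [hbR j]
      have h3 : (b j + R j) / (b j - R j) ≤ 2 * b j / (a j / b j) :=
        div_le_div₀ (by linarith) h2 (div_pos haj hbj) h1
      have h4 : 2 * b j / (a j / b j) = 2 / ε j := by
        rw [hε]; field_simp
      have h5 : Real.log ((b j + R j) / (b j - R j)) ≤ Real.log (2 / ε j) := by
        apply Real.log_le_log (div_pos (by linarith [hRpos j]) (hbR j))
        rw [← h4]; exact h3
      have h6 : ε j * Real.log (2 / ε j) ≤ 2 * Real.sqrt 2 * Real.sqrt (ε j) :=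
        mul_log_div_le (hεpos j) (by norm_num)
      have h7 : Real.sqrt 2 ≤ 3/2 := by
        rw [show (3:ℝ)/2 = Real.sqrt ((3/2)^2) by rw [Real.sqrt_sq]; norm_num]
        apply Real.sqrt_le_sqrt; norm_num
      have h8 : 2 * ε j * Real.log ((b j + R j) / (b j - R j))
          ≤ 2 * (ε j * Real.log (2 / ε j)) := by
        have := mul_le_mul_of_nonneg_left h5 (le_of_lt (hεpos j))
        nlinarith
      have h9 : 2 * Real.sqrt 2 * Real.sqrt (ε j) ≤ 3 * Real.sqrt (ε j) := by
        nlinarith [Real.sqrt_nonneg (ε j)]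
      nlinarith [Real.sqrt_nonneg (ε j)]
  -- assemble
  have hsum : Tendsto (fun j => 2 * (Real.log (ρ j) / b j)
      + (1 - b j) * (Real.log (τ j) / (b j)^2)
      + 2 * ε j * Real.log ((b j + R j) / (b j - R j))) atTop (nhds (-1)) := by
    have h1b : Tendsto (fun j => 1 - b j) atTop (nhds 1) := by
      have := (tendsto_const_nhds (x := (1:ℝ)) (f := atTop)).sub hb0
      simpa using this
    have := ((hlog1.const_mul 2).add (h1b.mul hlog2)).add hthird
    rw [show (2:ℝ) * (-1) + 1 * 1 + 0 = -1 by norm_num] at this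
    exact this
  refine Tendsto.congr' ?_ hsum
  filter_upwards [hasmall] with j hja
  obtain ⟨htp, h1tp, htm, h1tm, hwp, h1wp, hwm, h1wm, hzp, hzm⟩ := hpos j
  rw [Fdiff_eq (a j) (b j) (ha j) (by linarith) (hbpos j) ((hb j).2) (hdisc j)
    htp htm h1tp h1tm hwm]
  have hbj := (hbpos j).ne'
  rw [hρdef, hτdef, hε, hRdef]
  field_simp

set_option maxHeartbeats 2000000 in
/-- Lemma 1 of the paper: under the stated conditions, `η = -b² + o(b²)`,
i.e. `η_j / b_j² → -1`. -/
theorem eta_asymptotics (a b η : ℕ → ℝ)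
    (ha : ∀ j, 0 < a j)
    (hb : ∀ j, 0 < b j ∧ b j < 1)
    (hb0 : Tendsto b atTop (nhds 0))
    (hab : Tendsto (fun j => a j / (b j) ^ 2) atTop (nhds 0))
    (hdisc : ∀ j, 4 * a j * (1 - a j) < (b j) ^ 2)
    (hpos : ∀ j,
      0 < tPlus (a j) (b j) ∧ 0 < 1 - tPlus (a j) (b j) ∧
      0 < tMinus (a j) (b j) ∧ 0 < 1 - tMinus (a j) (b j) ∧
      0 < wPlus (a j) (b j) ∧ 0 < 1 - wPlus (a j) (b j) ∧
      0 < wMinus (a j) (b j) ∧ 0 < 1 - wMinus (a j) (b j) ∧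
      0 < 1 - (1 - tPlus (a j) (b j)) * wPlus (a j) (b j) ∧
      0 < 1 - (1 - tMinus (a j) (b j)) * wMinus (a j) (b j))
    (hη : ∀ j, η j < -4 * a j)
    (heq : ∀ j,
      2 * a j *
          Real.log ((1 - (η j + Real.sqrt ((η j) ^ 2 + 4 * a j * η j)) / (2 * η j)) /
            ((η j + Real.sqrt ((η j) ^ 2 + 4 * a j * η j)) / (2 * η j)))
        - Real.sqrt ((η j) ^ 2 + 4 * a j * η j) = Fdiff (a j) (b j)) :
    Tendsto (fun j => η j / (b j) ^ 2) atTop (nhds (-1)) := by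
  have hF := stepA a b ha hb hb0 hab hdisc hpos
  set ε : ℕ → ℝ := fun j => a j / (b j) ^ 2 with hε
  set x : ℕ → ℝ := fun j => -η j with hx
  set s : ℕ → ℝ := fun j => Real.sqrt ((η j) ^ 2 + 4 * a j * η j) with hs
  set m : ℕ → ℝ := fun j => -Fdiff (a j) (b j) with hm
  set L : ℕ → ℝ := fun j => Real.log ((x j + s j) / (x j - s j)) with hL
  have hbpos : ∀ j, 0 < b j := fun j => (hb j).1
  have hb2pos : ∀ j, 0 < (b j)^2 := fun j => pow_pos (hbpos j) 2
  have hεpos : ∀ j, 0 < ε j := fun j => by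
    simp only [hε]; exact div_pos (ha j) (hb2pos j)
  have haε : ∀ j, a j = ε j * (b j)^2 := fun j => by
    simp only [hε]; exact (div_mul_cancel₀ _ (ne_of_gt (hb2pos j))).symm
  clear_value ε x s m L
  have hx4a : ∀ j, 4 * a j < x j := fun j => by
    have := hη j; simp only [hx]; linarith
  have hxpos : ∀ j, 0 < x j := fun j => by linarith [hx4a j, ha j]
  have hqval : ∀ j, (η j) ^ 2 + 4 * a j * η j = x j ^ 2 - 4 * a j * x j := fun j => by
    simp only [hx]; ring
  have hqpos : ∀ j, 0 < x j ^ 2 - 4 * a j * x j := fun j => by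
    nlinarith [hx4a j, hxpos j]
  have hspos : ∀ j, 0 < s j := fun j => by
    simp only [hs]; exact Real.sqrt_pos.2 (by rw [hqval j]; exact hqpos j)
  have hssq : ∀ j, s j ^ 2 = x j ^ 2 - 4 * a j * x j := fun j => by
    simp only [hs]; rw [Real.sq_sqrt (by rw [hqval j]; exact (hqpos j).le), hqval j]
  have hsltx : ∀ j, s j < x j := fun j => by
    nlinarith [hssq j, hspos j, hxpos j, mul_pos (ha j) (hxpos j)]
  have hxles : ∀ j, x j ≤ s j + 4 * a j := fun j => by
    nlinarith [hssq j, hspos j, hx4a j, ha j,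
      mul_pos (ha j) (sub_pos.2 (hx4a j))]
  -- rewrite the equation
  have hseq : ∀ j, s j = 2 * a j * L j + m j := by
    intro j
    have h := heq j
    have hη0 : η j ≠ 0 := by
      have h1 := hη j; have h2 := ha j; intro hc; rw [hc] at h1; linarith
    have hηs : η j + s j ≠ 0 := by
      have h1 := hsltx j; simp only [hx] at h1; intro hc; linarith [hspos j]
    have hxs : x j - s j ≠ 0 := ne_of_gt (sub_pos.2 (hsltx j))
    have hrfl : Real.sqrt ((η j) ^ 2 + 4 * a j * η j) = s j := by simp only [hs]
    have hrfl2 : Real.log ((x j + s j) / (x j - s j)) = L j := by simp only [hL]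
    have harg : (1 - (η j + Real.sqrt ((η j) ^ 2 + 4 * a j * η j)) / (2 * η j)) /
          ((η j + Real.sqrt ((η j) ^ 2 + 4 * a j * η j)) / (2 * η j))
        = (x j + s j) / (x j - s j) := by
      rw [hrfl]
      simp only [hx] at hηs hxs ⊢
      field_simp
      ring
    rw [harg, hrfl, hrfl2] at h
    simp only [hm]
    linarith
  have hLnonneg : ∀ j, 0 ≤ L j := fun j => by
    simp only [hL]
    apply Real.log_nonneg
    rw [le_div_iff₀ (sub_pos.2 (hsltx j))]
    nlinarith [hspos j]
  have hLlog : ∀ j, L j ≤ Real.log (x j / a j) := fun j => by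
    simp only [hL]
    apply Real.log_le_log (div_pos (by nlinarith [hspos j, hxpos j]) (sub_pos.2 (hsltx j)))
    rw [div_le_div_iff₀ (sub_pos.2 (hsltx j)) (ha j)]
    have hkey : (s j * (x j + a j)) ^ 2 ≤ (x j * (x j - a j)) ^ 2 := by
      nlinarith [hssq j, mul_pos (ha j) (hxpos j),
        mul_pos (mul_pos (ha j) (ha j)) (hxpos j), sq_nonneg (a j), hxpos j, ha j]
    have hpos1 : 0 < x j * (x j - a j) := by
      nlinarith [hxpos j, hx4a j, ha j]
    have hpos2 : 0 ≤ s j * (x j + a j) := by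
      have := (hspos j).le; have := (hxpos j).le; have := (ha j).le; positivity
    nlinarith [hkey, hpos1, hpos2]
  -- m / b^2 tendsto 1
  have hm1 : Tendsto (fun j => m j / (b j) ^ 2) atTop (nhds 1) := by
    have h1 := hF.neg
    rw [show -(-1 : ℝ) = 1 by norm_num] at h1
    exact h1.congr fun j => by simp only [hm, neg_div]
  have hm2 : ∀ᶠ j in atTop, m j ≤ 2 * (b j) ^ 2 := by
    have h1 := hm1.eventually (eventually_lt_nhds (show (1:ℝ) < 2 by norm_num))
    filter_upwards [h1] with j hj
    have := (div_lt_iff₀ (hb2pos j)).1 hj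
    linarith
  have hεsmall : ∀ᶠ j in atTop, ε j < 1/100 :=
    hab.eventually (eventually_lt_nhds (by norm_num))
  -- main bounds
  have hbounds : ∀ᶠ j in atTop, m j / (b j)^2 ≤ x j / (b j)^2 ∧
      x j / (b j)^2 ≤ m j / (b j)^2 + 8 * Real.sqrt (ε j) + 4 * ε j := by
    filter_upwards [hm2, hεsmall] with j hjm hjε
    have haj := ha j
    have hbj := hbpos j
    have hb2 := hb2pos j
    have hsm : m j ≤ s j := by
      have := hseq j
      nlinarith [hLnonneg j, haj]
    have ha100 : 100 * a j ≤ (b j)^2 := by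
      rw [haε j]; nlinarith [hεpos j, hb2]
    -- bootstrap : s ≤ 3 b^2
    have hla : L j ≤ Real.log ((s j + 4 * a j) / a j) :=
      (hLlog j).trans (Real.log_le_log (div_pos (hxpos j) haj)
        ((div_le_div_iff_of_pos_right haj).2 (hxles j)))
    have hsa4pos : (0:ℝ) < s j + 4 * a j := by linarith [hspos j]
    have hsqa : Real.sqrt (4 * a j) = 2 * Real.sqrt (a j) := by
      rw [show (4:ℝ) * a j = 2^2 * a j by ring, Real.sqrt_mul (by positivity),
        Real.sqrt_sq (by norm_num)]
    have e2 : Real.sqrt (s j + 4 * a j)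
        ≤ Real.sqrt (s j) + 2 * Real.sqrt (a j) := by
      have := sqrt_add_le (s j) (4 * a j) (hspos j).le (by linarith)
      rwa [hsqa] at this
    have e3 : 2 * a j * L j ≤ 4 * Real.sqrt (a j) * Real.sqrt (s j) + 8 * a j := by
      have hlog2 : L j ≤ 2 * (Real.sqrt (s j + 4 * a j) / Real.sqrt (a j)) := by
        refine hla.trans ?_
        have h := log_le_two_sqrt (y := (s j + 4 * a j) / a j) (by positivity)
        rwa [Real.sqrt_div hsa4pos.le] at h
      have h4 : 2 * a j * L j ≤ 2 * a j * (2 * (Real.sqrt (s j + 4*a j) / Real.sqrt (a j))) :=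
        mul_le_mul_of_nonneg_left hlog2 (by linarith)
      have h5 : 2 * a j * (2 * (Real.sqrt (s j + 4*a j) / Real.sqrt (a j)))
          = 4 * Real.sqrt (a j) * Real.sqrt (s j + 4*a j) := by
        rw [show 2 * a j * (2 * (Real.sqrt (s j + 4*a j) / Real.sqrt (a j)))
          = 4 * (a j / Real.sqrt (a j)) * Real.sqrt (s j + 4*a j) by ring, Real.div_sqrt]
      have h6 : 4 * Real.sqrt (a j) * Real.sqrt (s j + 4*a j)
          ≤ 4 * Real.sqrt (a j) * (Real.sqrt (s j) + 2 * Real.sqrt (a j)) :=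
        mul_le_mul_of_nonneg_left e2 (by positivity)
      have h8 : (Real.sqrt (a j))^2 = a j := Real.sq_sqrt haj.le
      rw [h5] at h4
      have h9 := h4.trans h6
      nlinarith [h9, h8]
    have e4 : 4 * Real.sqrt (a j) * Real.sqrt (s j) ≤ s j / 4 + 16 * a j := by
      nlinarith [sq_nonneg (Real.sqrt (s j) / 2 - 4 * Real.sqrt (a j)),
        Real.sq_sqrt (hspos j).le, Real.sq_sqrt haj.le]
    have hs3 : s j ≤ 3 * (b j)^2 := by
      have h0 := hseq j
      have : s j ≤ s j / 4 + 24 * a j + m j := by linarith [e3, e4]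
      linarith
    -- final upper bound
    have hx4b : x j ≤ 4 * (b j)^2 := by
      have := hxles j; linarith
    have hεne : ε j ≠ 0 := (hεpos j).ne'
    have hfr : 4 * (b j)^2 / a j = 4 / ε j := by
      rw [haε j]; field_simp
    have hLfin : L j ≤ Real.log (4 / ε j) := by
      refine (hLlog j).trans ?_
      rw [← hfr]
      exact Real.log_le_log (div_pos (hxpos j) haj) ((div_le_div_iff_of_pos_right haj).2 hx4b)
    have hxfin : x j ≤ 2 * a j * Real.log (4 / ε j) + m j + 4 * a j := by
      have h0 := hseq j
      have h1 := hxles j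
      have h2 : 2 * a j * L j ≤ 2 * a j * Real.log (4 / ε j) :=
        mul_le_mul_of_nonneg_left hLfin (by linarith)
      linarith
    constructor
    · exact (div_le_div_iff_of_pos_right hb2).2 (hsm.trans (hsltx j).le)
    · have hdiv : x j / (b j)^2
          ≤ (2 * a j * Real.log (4 / ε j) + m j + 4 * a j) / (b j)^2 :=
        (div_le_div_iff_of_pos_right hb2).2 hxfin
      have heqd : (2 * a j * Real.log (4 / ε j) + m j + 4 * a j) / (b j)^2
          = 2 * (ε j * Real.log (4 / ε j)) + m j / (b j)^2 + 4 * ε j := by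
        rw [haε j]; field_simp
      have hml : ε j * Real.log (4 / ε j) ≤ 2 * Real.sqrt 4 * Real.sqrt (ε j) :=
        mul_log_div_le (hεpos j) (by norm_num)
      have hsq4 : Real.sqrt (4:ℝ) = 2 := by
        rw [show (4:ℝ) = 2^2 by norm_num, Real.sqrt_sq (by norm_num)]
      rw [heqd] at hdiv
      rw [hsq4] at hml
      linarith
  -- squeeze
  have hub : Tendsto (fun j => m j / (b j)^2 + 8 * Real.sqrt (ε j) + 4 * ε j)
      atTop (nhds 1) := by
    have h1 := (hm1.add ((hab.sqrt.const_mul 8))).add (hab.const_mul 4)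
    have : (1:ℝ) + 8 * Real.sqrt 0 + 4 * 0 = 1 := by simp
    rw [this] at h1
    exact h1
  have hxlim : Tendsto (fun j => x j / (b j)^2) atTop (nhds 1) :=
    tendsto_of_tendsto_of_tendsto_of_le_of_le' hm1 hub
      (hbounds.mono fun j h => h.1) (hbounds.mono fun j h => h.2)
  have := hxlim.neg
  rw [show -(1:ℝ) = -1 by norm_num] at this
  exact this.congr fun j => by simp only [hx, neg_div, neg_neg]
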